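/- Every nonnegative n×m real matrix P with rank(P) ≤ 2 satisfies rk₊(P) = rank(P). -/

import Mathlib

open Matrix BigOperators Filter Topology

/-- The nonnegative rank: least `k` such that `P` is a sum of `k` nonnegative dyads. -/
noncomputable def nnRank {n m : ℕ} (P : Matrix (Fin n) (Fin m) ℝ) : ℕ :=
  sInf {k : ℕ | ∃ (c : Fin k → Fin n → ℝ) (r : Fin k → Fin m → ℝ),
    (∀ h i, 0 ≤ c h i) ∧ (∀ h j, 0 ≤ r h j) ∧
    P = ∑ h, Matrix.vecMulVec (c h) (r h)}

/-- Frobenius distance between two matrices. -/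
noncomputable def frobDist {n m : ℕ} (P N : Matrix (Fin n) (Fin m) ℝ) : ℝ :=
  Real.sqrt (∑ i, ∑ j, (P i j - N i j) ^ 2)

private lemma trivialDecomp {n m : ℕ} (P : Matrix (Fin n) (Fin m) ℝ) (hP : ∀ i j, 0 ≤ P i j) :
    ∃ (c : Fin m → Fin n → ℝ) (r : Fin m → Fin m → ℝ),
    (∀ h i, 0 ≤ c h i) ∧ (∀ h j, 0 ≤ r h j) ∧
    P = ∑ h, Matrix.vecMulVec (c h) (r h) := by
  refine ⟨fun h i => P i h, fun h j => if j = h then 1 else 0, fun h i => hP i h,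
    fun h j => by positivity, ?_⟩
  ext i j
  simp [Matrix.sum_apply, vecMulVec_apply]

private lemma rank_le_decomp {n m k : ℕ} (P : Matrix (Fin n) (Fin m) ℝ)
    (c : Fin k → Fin n → ℝ) (r : Fin k → Fin m → ℝ)
    (hPd : P = ∑ h, Matrix.vecMulVec (c h) (r h)) : P.rank ≤ k := by
  rw [Matrix.rank_eq_finrank_span_cols]
  have hle : Submodule.span ℝ (Set.range Pᵀ) ≤ Submodule.span ℝ (Set.range c) := by
    rw [Submodule.span_le]
    rintro _ ⟨j, rfl⟩
    have hcol : Pᵀ j = ∑ h, (r h j) • c h := by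
      ext i
      subst hPd
      simp [Matrix.transpose_apply, Matrix.sum_apply, vecMulVec_apply, mul_comm]
    rw [hcol]
    exact Submodule.sum_mem _ fun h _ => Submodule.smul_mem _ _ (Submodule.subset_span ⟨h, rfl⟩)
  exact le_trans (Submodule.finrank_mono hle) (by simpa [Set.finrank] using finrank_range_le_card c)

private lemma decompRank0 {n m : ℕ} (P : Matrix (Fin n) (Fin m) ℝ) (h0 : P.rank = 0) :
    ∃ (c : Fin 0 → Fin n → ℝ) (r : Fin 0 → Fin m → ℝ),
    (∀ h i, 0 ≤ c h i) ∧ (∀ h j, 0 ≤ r h j) ∧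
    P = ∑ h, Matrix.vecMulVec (c h) (r h) := by
  refine ⟨Fin.elim0, Fin.elim0, fun h => h.elim0, fun h => h.elim0, ?_⟩
  rw [Matrix.rank_eq_finrank_span_cols] at h0
  have hbot : Submodule.span ℝ (Set.range Pᵀ) = ⊥ := Submodule.finrank_eq_zero.mp h0
  ext i j
  have : Pᵀ j ∈ (⊥ : Submodule ℝ (Fin n → ℝ)) := hbot ▸ Submodule.subset_span ⟨j, rfl⟩
  rw [Submodule.mem_bot] at this
  have h2 := congrFun this i
  simp only [Matrix.transpose_apply, Pi.zero_apply] at h2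
  simp [h2]

private lemma decompRank1 {n m : ℕ} (P : Matrix (Fin n) (Fin m) ℝ) (hP : ∀ i j, 0 ≤ P i j) (h1 : P.rank = 1) :
    ∃ (c : Fin 1 → Fin n → ℝ) (r : Fin 1 → Fin m → ℝ),
    (∀ h i, 0 ≤ c h i) ∧ (∀ h j, 0 ≤ r h j) ∧
    P = ∑ h, Matrix.vecMulVec (c h) (r h) := by
  rw [Matrix.rank_eq_finrank_span_cols] at h1
  change Module.finrank ℝ (Submodule.span ℝ (Set.range Pᵀ)) = 1 at h1
  -- some column nonzero
  have hex : ∃ a, Pᵀ a ≠ 0 := by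
    by_contra hall
    push_neg at hall
    have : Submodule.span ℝ (Set.range Pᵀ) = ⊥ := by
      rw [Submodule.span_eq_bot]
      rintro _ ⟨j, rfl⟩; exact hall j
    rw [this, finrank_bot] at h1; omega
  obtain ⟨a, ha⟩ := hex
  have hspan : Submodule.span ℝ {Pᵀ a} = Submodule.span ℝ (Set.range Pᵀ) := by
    apply Submodule.eq_of_le_of_finrank_le
    · exact Submodule.span_mono (Set.singleton_subset_iff.mpr ⟨a, rfl⟩)
    · rw [h1, finrank_span_singleton ha]
  obtain ⟨i₀, hi₀⟩ : ∃ i₀, Pᵀ a i₀ ≠ 0 := Function.ne_iff.mp ha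
  have hi₀pos : 0 < P i₀ a := lt_of_le_of_ne (hP i₀ a) (Ne.symm hi₀)
  have hrep : ∀ j, ∃ t : ℝ, 0 ≤ t ∧ Pᵀ j = t • Pᵀ a := by
    intro j
    have : Pᵀ j ∈ Submodule.span ℝ {Pᵀ a} := hspan.symm ▸ Submodule.subset_span ⟨j, rfl⟩
    obtain ⟨t, ht⟩ := Submodule.mem_span_singleton.mp this
    refine ⟨t, ?_, ht.symm⟩
    have := congrFun ht i₀
    simp only [Pi.smul_apply, smul_eq_mul, Matrix.transpose_apply] at this
    nlinarith [hP i₀ j]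
  choose t ht0 htrep using hrep
  refine ⟨fun _ => Pᵀ a, fun _ j => t j, fun _ i => hP i a, fun _ j => ht0 j, ?_⟩
  ext i j
  have := congrFun (htrep j) i
  simp only [Pi.smul_apply, smul_eq_mul, Matrix.transpose_apply] at this
  simp [Matrix.sum_apply, vecMulVec_apply, this, mul_comm]

private lemma decompRank2 {n m : ℕ} (P : Matrix (Fin n) (Fin m) ℝ) (hP : ∀ i j, 0 ≤ P i j)
    (h2 : Module.finrank ℝ (Submodule.span ℝ (Set.range Pᵀ)) = 2) :
    ∃ (c : Fin 2 → Fin n → ℝ) (r : Fin 2 → Fin m → ℝ),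
    (∀ h i, 0 ≤ c h i) ∧ (∀ h j, 0 ≤ r h j) ∧
    P = ∑ h, Matrix.vecMulVec (c h) (r h) := by
  classical
  set s : Fin m → ℝ := fun j => ∑ i, P i j with hs
  have hs0 : ∀ j, 0 ≤ s j := fun j => Finset.sum_nonneg fun i _ => hP i j
  have hspos : ∀ j, Pᵀ j ≠ 0 → 0 < s j := by
    intro j hj
    obtain ⟨i, hi⟩ := Function.ne_iff.mp hj
    exact Finset.sum_pos' (fun i _ => hP i j)
      ⟨i, Finset.mem_univ i, lt_of_le_of_ne (hP i j) (Ne.symm hi)⟩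
  set u : Fin m → Fin n → ℝ := fun j => (s j)⁻¹ • Pᵀ j with hu
  have hu_apply : ∀ j i, u j i = (s j)⁻¹ * P i j := fun j i => rfl
  have hu0 : ∀ j i, 0 ≤ u j i := fun j i =>
    mul_nonneg (inv_nonneg.mpr (hs0 j)) (hP i j)
  have husum : ∀ j, Pᵀ j ≠ 0 → ∑ i, u j i = 1 := by
    intro j hj
    simp only [hu_apply, ← Finset.mul_sum]
    exact inv_mul_cancel₀ (hspos j hj).ne'
  have hvju : ∀ j, Pᵀ j ≠ 0 → Pᵀ j = (s j) • u j := fun j hj =>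
    (smul_inv_smul₀ (hspos j hj).ne' _).symm
  -- exists nonzero column
  have hexa : ∃ a, Pᵀ a ≠ 0 := by
    by_contra hall
    push_neg at hall
    have hbot : Submodule.span ℝ (Set.range Pᵀ) = ⊥ := by
      rw [Submodule.span_eq_bot]
      rintro _ ⟨j, rfl⟩; exact hall j
    rw [hbot, finrank_bot] at h2; omega
  obtain ⟨a, ha⟩ := hexa
  have hua0 : u a ≠ 0 := by
    intro h
    have h1 := husum a ha
    rw [h] at h1
    simp at h1
  -- exists b with different normalization
  have hexb : ∃ b, Pᵀ b ≠ 0 ∧ u b ≠ u a := by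
    by_contra hall
    push_neg at hall
    have hle : Submodule.span ℝ (Set.range Pᵀ) ≤ Submodule.span ℝ {u a} := by
      rw [Submodule.span_le]
      rintro _ ⟨j, rfl⟩
      by_cases hj : Pᵀ j = 0
      · rw [hj]; exact Submodule.zero_mem _
      · rw [hvju j hj, hall j hj]
        exact Submodule.smul_mem _ _ (Submodule.mem_span_singleton_self _)
    have hle2 := Submodule.finrank_mono hle
    rw [h2, finrank_span_singleton hua0] at hle2
    omega
  obtain ⟨b, hb, hne⟩ := hexb
  -- linear independence of the two columns
  have hsum_pair : ∀ (p q : ℝ), (∀ i, p * u a i + q * u b i = 0) → p + q = 0 := by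
    intro p q h
    have : ∑ i, (p * u a i + q * u b i) = 0 := by
      simp only [h]; simp
    rwa [Finset.sum_add_distrib, ← Finset.mul_sum, ← Finset.mul_sum,
      husum a ha, husum b hb, mul_one, mul_one] at this
  have hindep : LinearIndependent ℝ ![Pᵀ a, Pᵀ b] := by
    rw [LinearIndependent.pair_iff]
    intro p q hpq
    have hpt : ∀ i, (p * s a) * u a i + (q * s b) * u b i = 0 := by
      intro i
      have := congrFun hpq i
      simp only [Pi.add_apply, Pi.smul_apply, smul_eq_mul, Pi.zero_apply] at this
      have hva := congrFun (hvju a ha) i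
      have hvb := congrFun (hvju b hb) i
      simp only [Pi.smul_apply, smul_eq_mul] at hva hvb
      rw [hva, hvb] at this
      ring_nf at this ⊢
      linarith [this]
    have hzero := hsum_pair _ _ hpt
    have hpa : p * s a = 0 := by
      by_contra hpa
      apply hne
      funext i
      have h1 := hpt i
      have h2 : (q * s b) = -(p * s a) := by linarith
      rw [h2] at h1
      have : (p * s a) * (u a i - u b i) = 0 := by ring_nf; linarith
      have := (mul_eq_zero.mp this).resolve_left hpa
      linarith
    have hp : p = 0 := by
      rcases mul_eq_zero.mp hpa with h | h
      · exact h
      · exact absurd h (hspos a ha).ne'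
    refine ⟨hp, ?_⟩
    rw [hp] at hpq
    simp only [zero_smul, zero_add] at hpq
    rcases smul_eq_zero.mp hpq with h | h
    · exact h
    · exact absurd h hb
  -- span of the two columns is everything
  have hspan2 : Submodule.span ℝ {Pᵀ a, Pᵀ b} = Submodule.span ℝ (Set.range Pᵀ) := by
    apply Submodule.eq_of_le_of_finrank_le
    · rw [Submodule.span_le]
      rintro x hx
      rcases hx with rfl | rfl
      · exact Submodule.subset_span ⟨a, rfl⟩
      · exact Submodule.subset_span ⟨b, rfl⟩
    · rw [h2]
      have hrange : ({Pᵀ a, Pᵀ b} : Set (Fin n → ℝ)) = Set.range ![Pᵀ a, Pᵀ b] := by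
        ext z
        simp only [Set.mem_insert_iff, Set.mem_singleton_iff, Set.mem_range, Fin.exists_fin_two]
        simp [Matrix.cons_val_zero, Matrix.cons_val_one, eq_comm]
      rw [hrange, finrank_span_eq_card hindep]
      simp
  -- representation of every column
  have hrep : ∀ j, ∃ t : ℝ, Pᵀ j = (s j * (1 - t)) • u a + (s j * t) • u b := by
    intro j
    by_cases hj : Pᵀ j = 0
    · refine ⟨0, ?_⟩
      have hsj : s j = 0 := by
        simp only [hs]
        apply Finset.sum_eq_zero
        intro i _
        exact congrFun hj i
      rw [hj, hsj]
      simp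
    · have hmem : Pᵀ j ∈ Submodule.span ℝ {Pᵀ a, Pᵀ b} :=
        hspan2.symm ▸ Submodule.subset_span ⟨j, rfl⟩
      obtain ⟨p, q, hpq⟩ := Submodule.mem_span_pair.mp hmem
      have hsumj : p * s a + q * s b = s j := by
        have := congrArg (fun v : Fin n → ℝ => ∑ i, v i) hpq
        simp only [Pi.add_apply, Pi.smul_apply, smul_eq_mul] at this
        rw [Finset.sum_add_distrib, ← Finset.mul_sum, ← Finset.mul_sum] at this
        exact this
      have hsj := (hspos j hj).ne'
      refine ⟨(q * s b) / s j, ?_⟩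
      have hc1 : s j * (1 - (q * s b) / s j) = p * s a := by
        field_simp
        linarith
      have hc2 : s j * ((q * s b) / s j) = q * s b := by field_simp
      rw [hc1, hc2, ← hpq]
      congr 1
      · rw [hvju a ha, smul_smul]
      · rw [hvju b hb, smul_smul]
  choose t ht using hrep
  -- pointwise forms
  have hPt : ∀ j i, P i j = s j * (1 - t j) * u a i + s j * t j * u b i := by
    intro j i
    have := congrFun (ht j) i
    simpa using this
  have hup : ∀ j, Pᵀ j ≠ 0 → ∀ i, u j i = (1 - t j) * u a i + t j * u b i := by
    intro j hj i
    have h1 := hPt j i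
    have h2 := congrFun (hvju j hj) i
    simp only [Pi.smul_apply, smul_eq_mul, Matrix.transpose_apply] at h2
    have hsj := (hspos j hj).ne'
    have hkey : s j * u j i = s j * ((1 - t j) * u a i + t j * u b i) := by
      rw [← h2, h1]; ring
    exact mul_left_cancel₀ hsj hkey
  -- min and max of t over nonzero columns
  let J : Finset (Fin m) := Finset.univ.filter fun j => Pᵀ j ≠ 0
  have haJ : a ∈ J := by simp [J, ha]
  have hbJ : b ∈ J := by simp [J, hb]
  have hJne : J.Nonempty := ⟨a, haJ⟩
  obtain ⟨jm, hjmJ, hjm⟩ := J.exists_min_image t hJne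
  obtain ⟨jM, hjMJ, hjM⟩ := J.exists_max_image t hJne
  have hjmne : Pᵀ jm ≠ 0 := by simpa [J] using hjmJ
  have hjMne : Pᵀ jM ≠ 0 := by simpa [J] using hjMJ
  have hd0 : 0 < t jM - t jm := by
    rcases lt_or_ge (t jm) (t jM) with h | h
    · linarith
    · exfalso
      apply hne
      have hta : t a = t b := by
        have h1 := hjm a haJ
        have h2 := hjm b hbJ
        have h3 := hjM a haJ
        have h4 := hjM b hbJ
        linarith
      funext i
      have h1 := hup a ha i
      have h2 := hup b hb i
      rw [← hta] at h2
      linarith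
  have hdne : t jM - t jm ≠ 0 := hd0.ne'
  -- final decomposition
  refine ⟨![u jm, u jM],
    ![fun j => if Pᵀ j = 0 then 0 else s j * (t jM - t j) / (t jM - t jm),
      fun j => if Pᵀ j = 0 then 0 else s j * (t j - t jm) / (t jM - t jm)], ?_, ?_, ?_⟩
  · rw [Fin.forall_fin_two]
    constructor <;> intro i <;>
      simp only [Matrix.cons_val_zero, Matrix.cons_val_one, Matrix.head_cons] <;> exact hu0 _ i
  · rw [Fin.forall_fin_two]
    constructor <;> intro j <;>
        simp only [Matrix.cons_val_zero, Matrix.cons_val_one, Matrix.head_cons] <;>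
        split_ifs with h1
    · exact le_refl 0
    · apply div_nonneg _ hd0.le
      apply mul_nonneg (hs0 j)
      have hjJ : j ∈ J := by simp [J, h1]
      linarith [hjM j hjJ]
    · exact le_refl 0
    · apply div_nonneg _ hd0.le
      apply mul_nonneg (hs0 j)
      have hjJ : j ∈ J := by simp [J, h1]
      linarith [hjm j hjJ]
  · ext i j
    simp only [Matrix.sum_apply, Fin.sum_univ_two, vecMulVec_apply,
      Matrix.cons_val_zero, Matrix.cons_val_one, Matrix.head_cons]
    by_cases hj : Pᵀ j = 0
    · rw [if_pos hj, if_pos hj]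
      have hz := congrFun hj i
      simp only [Matrix.transpose_apply, Pi.zero_apply] at hz
      simp [hz]
    · rw [if_neg hj, if_neg hj]
      have hA := hup jm hjmne i
      have hB := hup jM hjMne i
      have hC := hPt j i
      rw [hA, hB, hC]
      field_simp
      ring

theorem nnRank_eq_rank_of_rank_le_two {n m : ℕ} (P : Matrix (Fin n) (Fin m) ℝ)
    (hP : ∀ i j, 0 ≤ P i j) (hrk : P.rank ≤ 2) :
    nnRank P = P.rank := by
  obtain ⟨cm, rm, hcm, hrm, hPm⟩ := trivialDecomp P hP
  have hlow : P.rank ≤ nnRank P := by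
    unfold nnRank
    apply le_csInf
    · exact ⟨m, cm, rm, hcm, hrm, hPm⟩
    · rintro k ⟨c, r, -, -, hPd⟩
      exact rank_le_decomp P c r hPd
  have hup : nnRank P ≤ P.rank := by
    unfold nnRank
    apply Nat.sInf_le
    have h012 : P.rank = 0 ∨ P.rank = 1 ∨ P.rank = 2 := by omega
    rcases h012 with h | h | h <;> rw [h]
    · exact decompRank0 P h
    · exact decompRank1 P hP h
    · apply decompRank2 P hP
      change Module.finrank ℝ (Submodule.span ℝ (Set.range P.col)) = 2
      rw [← Matrix.rank_eq_finrank_span_cols]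
      exact h
  omega
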